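/- (Theorem 1, minimizer form.) Let S be a real symmetric matrix indexed by ι = Fin q ⊕ Fin q, let λ₁ ≥ 0 and λ₂ ≥ λ₂^sym. If Θ̂ is a positive definite symmetric matrix that minimizes the pdglasso objective L over all positive definite symmetric matrices (i.e. L(Θ̂) ≤ L(Θ) for every positive definite symmetric Θ), then Θ̄ := (Θ̂ + JΘ̂J)/2 is positive definite, fully symmetric (JΘ̄J = Θ̄, equivalently Θ̄_LL = Θ̄_RR and Θ̄_LR = Θ̄_RL), and is also a minimizer of L over all positive definite symmetric matrices. -/

import Mathlib

open Matrix Sum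

/-- The swap permutation matrix `J = fromBlocks 0 I I 0` on `Fin q ⊕ Fin q`. -/
noncomputable def Jswap (q : ℕ) : Matrix (Fin q ⊕ Fin q) (Fin q ⊕ Fin q) ℝ :=
  Matrix.fromBlocks 0 1 1 0

/-- Entrywise ℓ1 norm of a real matrix. -/
noncomputable def l1norm {m n : Type*} [Fintype m] [Fintype n] (A : Matrix m n ℝ) : ℝ :=
  ∑ i, ∑ j, |A i j|

/-- The pdglasso objective
`L(Θ) = -log det Θ + tr(SΘ) + λ₁‖Θ‖₁ + λ₂(‖Θ_LL - Θ_RR‖₁ + ‖Θ_LR - Θ_RL‖₁)`. -/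
noncomputable def pdObjective {q : ℕ} (S : Matrix (Fin q ⊕ Fin q) (Fin q ⊕ Fin q) ℝ)
    (l1 l2 : ℝ) (Θ : Matrix (Fin q ⊕ Fin q) (Fin q ⊕ Fin q) ℝ) : ℝ :=
  -Real.log Θ.det + (S * Θ).trace + l1 * l1norm Θ
    + l2 * (l1norm (Θ.toBlocks₁₁ - Θ.toBlocks₂₂) + l1norm (Θ.toBlocks₁₂ - Θ.toBlocks₂₁))

/-! ### Auxiliary lemmas -/

lemma Jswap_mul_Jswap (q : ℕ) : Jswap q * Jswap q = 1 := by
  simp [Jswap, Matrix.fromBlocks_multiply, ← Matrix.fromBlocks_one]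

lemma Jswap_transpose (q : ℕ) : (Jswap q)ᵀ = Jswap q := by
  simp [Jswap, Matrix.fromBlocks_transpose]

lemma JAJ_eq {q : ℕ} (A : Matrix (Fin q ⊕ Fin q) (Fin q ⊕ Fin q) ℝ) :
    Jswap q * A * Jswap q
      = fromBlocks A.toBlocks₂₂ A.toBlocks₂₁ A.toBlocks₁₂ A.toBlocks₁₁ := by
  conv_lhs => rw [← fromBlocks_toBlocks A]
  simp [Jswap, Matrix.fromBlocks_multiply]

lemma JAJ_apply {q : ℕ} (A : Matrix (Fin q ⊕ Fin q) (Fin q ⊕ Fin q) ℝ)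
    (i j : Fin q ⊕ Fin q) :
    (Jswap q * A * Jswap q) i j = A i.swap j.swap := by
  rw [JAJ_eq]; cases i <;> cases j <;> rfl

lemma posDef_JAJ {q : ℕ} {A : Matrix (Fin q ⊕ Fin q) (Fin q ⊕ Fin q) ℝ} (hA : A.PosDef) :
    (Jswap q * A * Jswap q).PosDef := by
  have hJH : (Jswap q)ᴴ = Jswap q := by
    rw [conjTranspose_eq_transpose_of_trivial, Jswap_transpose]
  refine Matrix.PosDef.of_dotProduct_mulVec_pos ?_ ?_
  · simpa [hJH, Jswap_transpose] using Matrix.isHermitian_conjTranspose_mul_mul (Jswap q) hA.1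
  · intro x hx
    have hxJ : Jswap q *ᵥ x ≠ 0 := by
      intro h
      apply hx
      have := congrArg (fun v => Jswap q *ᵥ v) h
      simpa [Matrix.mulVec_mulVec, Jswap_mul_Jswap] using this
    have key : star x ⬝ᵥ ((Jswap q * A * Jswap q) *ᵥ x)
        = star (Jswap q *ᵥ x) ⬝ᵥ (A *ᵥ (Jswap q *ᵥ x)) := by
      simp only [star_trivial, ← Matrix.mulVec_mulVec]
      rw [Matrix.dotProduct_mulVec]
      rw [← Matrix.mulVec_transpose, Jswap_transpose]
    rw [key]
    exact hA.dotProduct_mulVec_pos hxJ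

lemma posDef_smul {n : Type*} [Fintype n] [DecidableEq n] {A : Matrix n n ℝ}
    (hA : A.PosDef) {c : ℝ} (hc : 0 < c) : (c • A).PosDef := by
  refine Matrix.PosDef.of_dotProduct_mulVec_pos ?_ ?_
  · unfold Matrix.IsHermitian
    rw [conjTranspose_smul, star_trivial, hA.1.eq]
  · intro x hx
    have := hA.dotProduct_mulVec_pos hx
    simp only [smul_mulVec, dotProduct_smul, smul_eq_mul]
    exact mul_pos hc this

lemma sum_swap_eq {q : ℕ} (f : Fin q ⊕ Fin q → ℝ) : ∑ i, f (Sum.swap i) = ∑ i, f i :=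
  Fintype.sum_equiv (Equiv.sumComm (Fin q) (Fin q)) _ _ (fun i => by cases i <;> rfl)

lemma l1norm_nonneg {m n : Type*} [Fintype m] [Fintype n] (A : Matrix m n ℝ) :
    0 ≤ l1norm A :=
  Finset.sum_nonneg fun _ _ => Finset.sum_nonneg fun _ _ => abs_nonneg _

lemma l1norm_JAJ {q : ℕ} (A : Matrix (Fin q ⊕ Fin q) (Fin q ⊕ Fin q) ℝ) :
    l1norm (Jswap q * A * Jswap q) = l1norm A := by
  unfold l1norm
  simp only [JAJ_apply]
  calc ∑ i, ∑ j, |A (Sum.swap i) (Sum.swap j)|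
      = ∑ i, ∑ j, |A i (Sum.swap j)| := sum_swap_eq (fun i => ∑ j, |A i (Sum.swap j)|)
    _ = ∑ i, ∑ j, |A i j| := Finset.sum_congr rfl fun i _ => sum_swap_eq (fun j => |A i j|)

lemma trace_mul_apply {n : Type*} [Fintype n] (A B : Matrix n n ℝ) :
    (A * B).trace = ∑ i, ∑ j, A i j * B j i := by
  simp [Matrix.trace, Matrix.diag, Matrix.mul_apply]

lemma combine_sums {q : ℕ} (f g : (Fin q ⊕ Fin q) → (Fin q ⊕ Fin q) → ℝ) :
    ((∑ i, ∑ j, f i j) - (∑ i, ∑ j, g i j)) = ∑ i : Fin q, ∑ j : Fin q,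
      ((f (inl i) (inl j) - g (inl i) (inl j)) + (f (inl i) (inr j) - g (inl i) (inr j))
        + (f (inr i) (inl j) - g (inr i) (inl j)) + (f (inr i) (inr j) - g (inr i) (inr j))) := by
  simp only [Fintype.sum_sum_type, Finset.sum_add_distrib, Finset.sum_sub_distrib]
  ring

lemma trace_S_JTJ_le {q : ℕ} (S T : Matrix (Fin q ⊕ Fin q) (Fin q ⊕ Fin q) ℝ) {l2 : ℝ}
    (hl2 : ∀ i j : Fin q,
      max (|S (inl i) (inl j) - S (inr i) (inr j)| / 2)
          (|S (inr i) (inl j) - S (inl i) (inr j)| / 2) ≤ l2) :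
    (S * (Jswap q * T * Jswap q)).trace ≤ (S * T).trace
      + 2 * l2 * (l1norm (T.toBlocks₁₁ - T.toBlocks₂₂) + l1norm (T.toBlocks₁₂ - T.toBlocks₂₁)) := by
  rw [← sub_le_iff_le_add']
  rw [trace_mul_apply, trace_mul_apply]
  simp only [JAJ_apply]
  rw [combine_sums (fun i j => S i j * T j.swap i.swap) (fun i j => S i j * T j i)]
  have hbound : ∀ i j : Fin q,
      (S (inl i) (inl j) * T (inr j) (inr i) - S (inl i) (inl j) * T (inl j) (inl i))
        + (S (inl i) (inr j) * T (inl j) (inr i) - S (inl i) (inr j) * T (inr j) (inl i))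
        + (S (inr i) (inl j) * T (inr j) (inl i) - S (inr i) (inl j) * T (inl j) (inr i))
        + (S (inr i) (inr j) * T (inl j) (inl i) - S (inr i) (inr j) * T (inr j) (inr i))
      ≤ 2 * l2 * |(T.toBlocks₁₁ - T.toBlocks₂₂) j i|
        + 2 * l2 * |(T.toBlocks₁₂ - T.toBlocks₂₁) j i| := by
    intro i j
    have h1 : |S (inl i) (inl j) - S (inr i) (inr j)| ≤ 2 * l2 := by
      have := (le_max_left _ _).trans (hl2 i j); linarith
    have h2 : |S (inr i) (inl j) - S (inl i) (inr j)| ≤ 2 * l2 := by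
      have := (le_max_right _ _).trans (hl2 i j); linarith
    have e1 : (T.toBlocks₁₁ - T.toBlocks₂₂) j i = T (inl j) (inl i) - T (inr j) (inr i) := rfl
    have e2 : (T.toBlocks₁₂ - T.toBlocks₂₁) j i = T (inl j) (inr i) - T (inr j) (inl i) := rfl
    have key1 : (S (inr i) (inr j) - S (inl i) (inl j)) * (T (inl j) (inl i) - T (inr j) (inr i))
        ≤ 2 * l2 * |(T.toBlocks₁₁ - T.toBlocks₂₂) j i| := by
      rw [e1]
      calc (S (inr i) (inr j) - S (inl i) (inl j)) * (T (inl j) (inl i) - T (inr j) (inr i))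
          ≤ |(S (inr i) (inr j) - S (inl i) (inl j)) * (T (inl j) (inl i) - T (inr j) (inr i))| :=
            le_abs_self _
        _ = |S (inr i) (inr j) - S (inl i) (inl j)| * |T (inl j) (inl i) - T (inr j) (inr i)| :=
            abs_mul _ _
        _ ≤ 2 * l2 * |T (inl j) (inl i) - T (inr j) (inr i)| := by
            apply mul_le_mul_of_nonneg_right _ (abs_nonneg _)
            rw [abs_sub_comm]; exact h1
    have key2 : (S (inl i) (inr j) - S (inr i) (inl j)) * (T (inl j) (inr i) - T (inr j) (inl i))
        ≤ 2 * l2 * |(T.toBlocks₁₂ - T.toBlocks₂₁) j i| := by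
      rw [e2]
      calc (S (inl i) (inr j) - S (inr i) (inl j)) * (T (inl j) (inr i) - T (inr j) (inl i))
          ≤ |(S (inl i) (inr j) - S (inr i) (inl j)) * (T (inl j) (inr i) - T (inr j) (inl i))| :=
            le_abs_self _
        _ = |S (inl i) (inr j) - S (inr i) (inl j)| * |T (inl j) (inr i) - T (inr j) (inl i)| :=
            abs_mul _ _
        _ ≤ 2 * l2 * |T (inl j) (inr i) - T (inr j) (inl i)| := by
            apply mul_le_mul_of_nonneg_right _ (abs_nonneg _)
            rw [abs_sub_comm]; exact h2
    nlinarith [key1, key2]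
  calc ∑ i : Fin q, ∑ j : Fin q, _ ≤ ∑ i : Fin q, ∑ j : Fin q,
        (2 * l2 * |(T.toBlocks₁₁ - T.toBlocks₂₂) j i|
          + 2 * l2 * |(T.toBlocks₁₂ - T.toBlocks₂₁) j i|) :=
      Finset.sum_le_sum fun i _ => Finset.sum_le_sum fun j _ => by
        have := hbound i j
        convert this using 2 <;> rfl
    _ = 2 * l2 * (l1norm (T.toBlocks₁₁ - T.toBlocks₂₂)
          + l1norm (T.toBlocks₁₂ - T.toBlocks₂₁)) := by
      unfold l1norm
      rw [Finset.sum_comm (s := Finset.univ) (t := Finset.univ)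
        (f := fun i j => 2 * l2 * |(T.toBlocks₁₁ - T.toBlocks₂₂) j i|
          + 2 * l2 * |(T.toBlocks₁₂ - T.toBlocks₂₁) j i|)]
      simp only [Finset.sum_add_distrib, ← Finset.mul_sum]
      ring

lemma two_pow_le_det_one_add {n : Type*} [Fintype n] [DecidableEq n]
    {C : Matrix n n ℝ} (hC : C.PosSemidef) (h1 : C.det = 1) :
    (2 : ℝ) ^ (Fintype.card n) ≤ (1 + C).det := by
  have hH : C.IsHermitian := hC.1
  have hμ0 : ∀ i, 0 ≤ hH.eigenvalues i := hC.eigenvalues_nonneg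
  have hU : (hH.eigenvectorUnitary : Matrix n n ℝ) * star (hH.eigenvectorUnitary : Matrix n n ℝ)
      = 1 := (Matrix.mem_unitaryGroup_iff).mp hH.eigenvectorUnitary.2
  have hspec := hH.spectral_theorem
  rw [Unitary.conjStarAlgAut_apply] at hspec
  have hdecomp : 1 + C = (hH.eigenvectorUnitary : Matrix n n ℝ)
      * (1 + diagonal (RCLike.ofReal ∘ hH.eigenvalues))
      * star (hH.eigenvectorUnitary : Matrix n n ℝ) := by
    rw [mul_add, add_mul, mul_one, hU, ← hspec]
  have hdetU : (hH.eigenvectorUnitary : Matrix n n ℝ).det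
      * (star (hH.eigenvectorUnitary : Matrix n n ℝ)).det = 1 := by
    rw [← det_mul, hU, det_one]
  have hdet1 : (1 + C).det = ∏ i, (1 + hH.eigenvalues i) := by
    rw [hdecomp, det_mul, det_mul]
    rw [show ∀ a b c : ℝ, a * b * c = (a * c) * b from fun a b c => by ring, hdetU, one_mul]
    rw [show (1 : Matrix n n ℝ) = diagonal (fun _ => 1) from (diagonal_one).symm,
      diagonal_add, det_diagonal]
    simp [RCLike.ofReal_real_eq_id]
  have hprodμ : ∏ i, hH.eigenvalues i = 1 := by
    have := hH.det_eq_prod_eigenvalues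
    rw [h1] at this
    simpa [RCLike.ofReal_real_eq_id] using this.symm
  have h3 : 0 ≤ ∏ i, Real.sqrt (hH.eigenvalues i) :=
    Finset.prod_nonneg fun i _ => Real.sqrt_nonneg _
  have hsq : ∏ i, Real.sqrt (hH.eigenvalues i) = 1 := by
    have h2 : (∏ i, Real.sqrt (hH.eigenvalues i)) ^ 2 = ∏ i, hH.eigenvalues i := by
      rw [← Finset.prod_pow]
      exact Finset.prod_congr rfl fun i _ => Real.sq_sqrt (hμ0 i)
    rw [← Real.sqrt_sq h3, h2, hprodμ, Real.sqrt_one]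
  rw [hdet1]
  calc (2 : ℝ) ^ (Fintype.card n) = ∏ i : n, 2 * Real.sqrt (hH.eigenvalues i) := by
        rw [Finset.prod_mul_distrib, Finset.prod_const, hsq, mul_one, Finset.card_univ]
    _ ≤ ∏ i, (1 + hH.eigenvalues i) :=
        Finset.prod_le_prod (fun i _ => by positivity)
          (fun i _ => by
            nlinarith [Real.sq_sqrt (hμ0 i), sq_nonneg (1 - Real.sqrt (hH.eigenvalues i))])

open scoped MatrixOrder in
lemma det_le_det_half_add {n : Type*} [Fintype n] [DecidableEq n]
    {A B : Matrix n n ℝ} (hA : A.PosDef) (hB : B.PosDef) (hdet : B.det = A.det) :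
    A.det ≤ ((1 / 2 : ℝ) • (A + B)).det := by
  classical
  have hM : Matrix.PosSemidef (CFC.sqrt A) := (CFC.sqrt_nonneg A).posSemidef
  set M := CFC.sqrt A with hMdef
  have hMM : M * M = A := CFC.sqrt_mul_sqrt_self A hA.posSemidef.nonneg
  have hdetA : 0 < A.det := hA.det_pos
  have hMsq : M.det * M.det = A.det := by rw [← det_mul, hMM]
  have hMdet0 : M.det ≠ 0 := by
    intro h; rw [h, mul_zero] at hMsq; exact hdetA.ne' hMsq.symm
  have hMH : M.IsHermitian := hM.1
  have hMinvH : M⁻¹.IsHermitian := hMH.inv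
  set C := M⁻¹ * B * M⁻¹ with hCdef
  have hCps : C.PosSemidef := by
    have h := hB.posSemidef.mul_mul_conjTranspose_same M⁻¹
    rwa [hMinvH.eq] at h
  have h1 : M * M⁻¹ = 1 := mul_nonsing_inv M (isUnit_iff_ne_zero.mpr hMdet0)
  have h2 : M⁻¹ * M = 1 := nonsing_inv_mul M (isUnit_iff_ne_zero.mpr hMdet0)
  have hMCM : M * C * M = B := by
    rw [hCdef, ← mul_assoc, ← mul_assoc, h1, one_mul, mul_assoc, h2, mul_one]
  have hABM : A + B = M * (1 + C) * M := by
    rw [mul_add, mul_one, add_mul, hMM, hMCM]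
  have hdetC : C.det = 1 := by
    have : C.det = M⁻¹.det * B.det * M⁻¹.det := by rw [hCdef, det_mul, det_mul]
    rw [this, det_nonsing_inv, Ring.inverse_eq_inv', hdet, ← hMsq]
    field_simp
  have hkey : (2 : ℝ) ^ (Fintype.card n) ≤ (1 + C).det := two_pow_le_det_one_add hCps hdetC
  have hdetAB : (A + B).det = A.det * (1 + C).det := by
    rw [hABM, det_mul, det_mul]
    rw [show ∀ a b c : ℝ, a * b * c = (a * c) * b from fun a b c => by ring, hMsq]
  rw [det_smul, hdetAB]
  calc A.det = (1 / 2 : ℝ) ^ (Fintype.card n) * (A.det * 2 ^ (Fintype.card n)) := by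
        rw [show (1/2 : ℝ) ^ Fintype.card n * (A.det * 2 ^ Fintype.card n)
            = A.det * ((1/2 : ℝ) * 2) ^ Fintype.card n from by rw [mul_pow]; ring]
        norm_num
    _ ≤ (1 / 2 : ℝ) ^ (Fintype.card n) * (A.det * (1 + C).det) := by
        apply mul_le_mul_of_nonneg_left _ (by positivity)
        exact mul_le_mul_of_nonneg_left hkey hdetA.le

lemma Jconj_conj {q : ℕ} (X : Matrix (Fin q ⊕ Fin q) (Fin q ⊕ Fin q) ℝ) :
    Jswap q * (Jswap q * X * Jswap q) * Jswap q = X := by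
  have h : Jswap q * (Jswap q * X * Jswap q) * Jswap q
      = (Jswap q * Jswap q) * X * (Jswap q * Jswap q) := by noncomm_ring
  rw [h, Jswap_mul_Jswap]
  simp


/-- Theorem 1, minimizer form: if `λ₂ ≥ λ₂^sym` and `Θ̂` minimizes the
pdglasso objective over positive definite symmetric matrices, then `Θ̄ = (Θ̂ + JΘ̂J)/2`
is positive definite, fully symmetric, and also a minimizer. -/
theorem pdglasso_fully_symmetric_minimizer (q : ℕ) (hq : 0 < q)
    (S : Matrix (Fin q ⊕ Fin q) (Fin q ⊕ Fin q) ℝ) (hS : S.IsSymm)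
    (l1 l2 : ℝ) (hl1 : 0 ≤ l1)
    (hl2 : ∀ i j : Fin q,
      max (|S (inl i) (inl j) - S (inr i) (inr j)| / 2)
          (|S (inr i) (inl j) - S (inl i) (inr j)| / 2) ≤ l2)
    (Θhat : Matrix (Fin q ⊕ Fin q) (Fin q ⊕ Fin q) ℝ) (hΘ : Θhat.PosDef) (hΘs : Θhat.IsSymm)
    (hmin : ∀ Θ : Matrix (Fin q ⊕ Fin q) (Fin q ⊕ Fin q) ℝ, Θ.PosDef → Θ.IsSymm →
      pdObjective S l1 l2 Θhat ≤ pdObjective S l1 l2 Θ) :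
    ((1 / 2 : ℝ) • (Θhat + Jswap q * Θhat * Jswap q)).PosDef ∧
      Jswap q * ((1 / 2 : ℝ) • (Θhat + Jswap q * Θhat * Jswap q)) * Jswap q
        = (1 / 2 : ℝ) • (Θhat + Jswap q * Θhat * Jswap q) ∧
      ((1 / 2 : ℝ) • (Θhat + Jswap q * Θhat * Jswap q)).toBlocks₁₁
        = ((1 / 2 : ℝ) • (Θhat + Jswap q * Θhat * Jswap q)).toBlocks₂₂ ∧
      ((1 / 2 : ℝ) • (Θhat + Jswap q * Θhat * Jswap q)).toBlocks₁₂
        = ((1 / 2 : ℝ) • (Θhat + Jswap q * Θhat * Jswap q)).toBlocks₂₁ ∧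
      ∀ Θ : Matrix (Fin q ⊕ Fin q) (Fin q ⊕ Fin q) ℝ, Θ.PosDef → Θ.IsSymm →
        pdObjective S l1 l2 ((1 / 2 : ℝ) • (Θhat + Jswap q * Θhat * Jswap q))
          ≤ pdObjective S l1 l2 Θ := by
  have hJTJpd : (Jswap q * Θhat * Jswap q).PosDef := posDef_JAJ hΘ
  set Θbar := (1 / 2 : ℝ) • (Θhat + Jswap q * Θhat * Jswap q) with hbardef
  have hpd : Θbar.PosDef := posDef_smul (hΘ.add hJTJpd) (by norm_num)
  -- full symmetry
  have hfull : Jswap q * Θbar * Jswap q = Θbar := by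
    rw [hbardef, mul_smul_comm, smul_mul_assoc, mul_add, add_mul, Jconj_conj,
      add_comm (Jswap q * Θhat * Jswap q) Θhat]
  -- block identities
  have hfb := hfull
  rw [JAJ_eq] at hfb
  have h11 : Θbar.toBlocks₁₁ = Θbar.toBlocks₂₂ := by
    conv_lhs => rw [← hfb]
    simp [Matrix.toBlocks_fromBlocks₁₁]
  have h12 : Θbar.toBlocks₁₂ = Θbar.toBlocks₂₁ := by
    conv_lhs => rw [← hfb]
    simp [Matrix.toBlocks_fromBlocks₁₂]
  refine ⟨hpd, hfull, h11, h12, ?_⟩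
  -- the minimization part
  intro Θ hΘ' hΘs'
  refine le_trans ?_ (hmin Θ hΘ' hΘs')
  -- it suffices to show L(Θbar) ≤ L(Θhat)
  have hdetJ : (Jswap q * Θhat * Jswap q).det = Θhat.det := by
    have h : (Jswap q).det * (Jswap q).det = 1 := by
      rw [← det_mul, Jswap_mul_Jswap, det_one]
    rw [det_mul, det_mul]
    linear_combination Θhat.det * h
  have hdetbar : Θhat.det ≤ Θbar.det := det_le_det_half_add hΘ hJTJpd hdetJ
  have hlog : -Real.log Θbar.det ≤ -Real.log Θhat.det :=
    neg_le_neg (Real.log_le_log hΘ.det_pos hdetbar)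
  set P : ℝ := l1norm (Θhat.toBlocks₁₁ - Θhat.toBlocks₂₂)
    + l1norm (Θhat.toBlocks₁₂ - Θhat.toBlocks₂₁) with hPdef
  have htrace : (S * Θbar).trace ≤ (S * Θhat).trace + l2 * P := by
    have hsplit : (S * Θbar).trace
        = (1 / 2 : ℝ) * ((S * Θhat).trace + (S * (Jswap q * Θhat * Jswap q)).trace) := by
      rw [hbardef, mul_smul_comm, trace_smul, mul_add, trace_add, smul_eq_mul]
    have hb := trace_S_JTJ_le S Θhat hl2
    rw [hsplit, hPdef]
    linarith
  have hl1norm : l1norm Θbar ≤ l1norm Θhat := by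
    have hstep : l1norm Θbar ≤ (1 / 2 : ℝ) * (l1norm Θhat + l1norm (Jswap q * Θhat * Jswap q)) := by
      unfold l1norm
      calc ∑ i, ∑ j, |Θbar i j|
          ≤ ∑ i, ∑ j, ((1 / 2 : ℝ) * |Θhat i j|
              + (1 / 2 : ℝ) * |(Jswap q * Θhat * Jswap q) i j|) := by
            apply Finset.sum_le_sum
            intro i _
            apply Finset.sum_le_sum
            intro j _
            have hb : Θbar i j = (1 / 2 : ℝ) * (Θhat i j + (Jswap q * Θhat * Jswap q) i j) := by
              rw [hbardef]; simp [Matrix.add_apply]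
            rw [hb, abs_mul]
            have h2 : |(1 / 2 : ℝ)| = 1 / 2 := by norm_num
            have := abs_add_le (Θhat i j) ((Jswap q * Θhat * Jswap q) i j)
            rw [h2]
            nlinarith [this]
        _ = (1 / 2 : ℝ) * (∑ i, ∑ j, |Θhat i j|
              + ∑ i, ∑ j, |(Jswap q * Θhat * Jswap q) i j|) := by
            simp only [Finset.sum_add_distrib, Finset.mul_sum, mul_add]
    rw [l1norm_JAJ] at hstep
    linarith
  have hpen : l1norm (Θbar.toBlocks₁₁ - Θbar.toBlocks₂₂)
      + l1norm (Θbar.toBlocks₁₂ - Θbar.toBlocks₂₁) = 0 := by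
    rw [h11, h12, sub_self, sub_self]
    simp [l1norm]
  have hl2nn : 0 ≤ l2 := by
    have := hl2 ⟨0, hq⟩ ⟨0, hq⟩
    exact le_trans (le_max_of_le_left (by positivity)) this
  have hPnn : 0 ≤ P := add_nonneg (l1norm_nonneg _) (l1norm_nonneg _)
  unfold pdObjective
  rw [hpen, mul_zero, add_zero]
  have hn : l1 * l1norm Θbar ≤ l1 * l1norm Θhat := mul_le_mul_of_nonneg_left hl1norm hl1
  rw [← hPdef]
  linarith
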